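/- Let f(x) = a₀x³ + 3a₁x² + 3a₂x + a₃ over ℂ with D₁ = a₀a₂ − a₁² ≠ 0, D₂ = a₀a₃ − a₁a₂, D₃ = a₁a₃ − a₂², and D₂² − 4D₁D₃ ≠ 0. Let λ₁ ≠ λ₂ be the roots of λ² − D₂λ + D₁D₃ = 0 and suppose γ ∈ ℂ satisfies γ³ = (λ₂a₀ − D₁a₁)/(λ₁a₀ − D₁a₁). Let ω = e^{2πi/3}. Then for each i = 0, 1, 2 with γωⁱ ≠ 1, the number xᵢ = (γωⁱλ₁ − λ₂)/(D₁(1 − γωⁱ)) satisfies f(xᵢ) = 0. -/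

import Mathlib

open Complex

theorem stmt12 (a₀ a₁ a₂ a₃ : ℂ)
    (D₁ D₂ D₃ : ℂ) (hD₁ : D₁ = a₀*a₂ - a₁^2) (hD₂ : D₂ = a₀*a₃ - a₁*a₂)
    (hD₃ : D₃ = a₁*a₃ - a₂^2)
    (hD₁ne : D₁ ≠ 0) (hdisc : D₂^2 - 4*D₁*D₃ ≠ 0)
    (l₁ l₂ : ℂ) (hroot₁ : l₁^2 - D₂*l₁ + D₁*D₃ = 0)
    (hroot₂ : l₂^2 - D₂*l₂ + D₁*D₃ = 0) (hne : l₁ ≠ l₂)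
    (γ ω : ℂ) (hγ : γ^3 = (l₂*a₀ - D₁*a₁)/(l₁*a₀ - D₁*a₁))
    (hω : ω = Complex.exp (2 * Real.pi * Complex.I / 3)) :
    ∀ i : Fin 3, γ * ω^(i : ℕ) ≠ 1 →
      a₀ * ((γ*ω^(i : ℕ)*l₁ - l₂)/(D₁*(1 - γ*ω^(i : ℕ))))^3
        + 3*a₁ * ((γ*ω^(i : ℕ)*l₁ - l₂)/(D₁*(1 - γ*ω^(i : ℕ))))^2
        + 3*a₂ * ((γ*ω^(i : ℕ)*l₁ - l₂)/(D₁*(1 - γ*ω^(i : ℕ))))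
        + a₃ = 0 := by
  have hlne : l₁ - l₂ ≠ 0 := sub_ne_zero.mpr hne
  -- sum and product of the λ's
  have hs : l₁ + l₂ = D₂ := by
    have h : (l₁ - l₂) * (l₁ + l₂ - D₂) = 0 := by linear_combination hroot₁ - hroot₂
    rcases mul_eq_zero.mp h with h' | h'
    · exact absurd h' hlne
    · exact sub_eq_zero.mp h'
  have hp : l₁ * l₂ = D₁ * D₃ := by linear_combination l₁ * hs - hroot₁
  have hprod : (l₁*a₀ - D₁*a₁) * (l₂*a₀ - D₁*a₁) = -D₁^3 := by
    rw [hD₁] at *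
    linear_combination a₀^2 * hp - (a₀*a₂ - a₁^2)*a₁*a₀ * hs
      + ((a₀*a₂-a₁^2)*a₀^2) * hD₃ - ((a₀*a₂-a₁^2)*a₁*a₀) * hD₂
  have hne1 : l₁*a₀ - D₁*a₁ ≠ 0 := by
    intro h
    apply hD₁ne
    rw [h, zero_mul] at hprod
    have h3 : D₁^3 = 0 := by linear_combination hprod
    exact pow_eq_zero_iff (by norm_num) |>.mp h3
  have hω3 : ω^3 = 1 := by
    rw [hω, ← Complex.exp_nat_mul]
    rw [show ((3:ℕ):ℂ) * (2 * (Real.pi:ℂ) * Complex.I / 3) = 2*(Real.pi:ℂ)*Complex.I by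
      push_cast; ring]
    exact Complex.exp_two_pi_mul_I
  intro i hi
  set t := γ * ω^(i:ℕ) with htd
  have ht3 : t^3 = γ^3 := by
    rw [htd, mul_pow, ← pow_mul, mul_comm (i:ℕ) 3, pow_mul, hω3, one_pow, mul_one]
  have htt : t^3 * (l₁*a₀ - D₁*a₁) = l₂*a₀ - D₁*a₁ := by
    rw [ht3, hγ]; exact div_mul_cancel₀ _ hne1
  have h1t : (1:ℂ) - t ≠ 0 := sub_ne_zero.mpr (Ne.symm hi)
  have hd : D₁*(1-t) ≠ 0 := mul_ne_zero hD₁ne h1t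
  have he1 : D₁*a₁*(l₁+l₂) - a₀*(l₁*l₂) = a₂*D₁^2 := by
    rw [hs, hp, hD₁, hD₂, hD₃]; ring
  have he0 : D₁*a₁*((l₁+l₂)^2 - l₁*l₂) - a₀*(l₁*l₂)*(l₁+l₂) = a₃*D₁^3 := by
    rw [hs, hp, hD₁, hD₂, hD₃]; ring
  have hkey : a₀*(t*l₁-l₂)^3 + 3*a₁*(t*l₁-l₂)^2*(D₁*(1-t))
      + 3*a₂*(t*l₁-l₂)*(D₁*(1-t))^2 + a₃*(D₁*(1-t))^3 = 0 := by
    linear_combination (l₁-l₂)^2 * htt - 3*(t*l₁-l₂)*(1-t)^2 * he1 - (1-t)^3 * he0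
  have heq : a₀ * ((t*l₁-l₂)/(D₁*(1-t)))^3 + 3*a₁*((t*l₁-l₂)/(D₁*(1-t)))^2
      + 3*a₂*((t*l₁-l₂)/(D₁*(1-t))) + a₃
      = (a₀*(t*l₁-l₂)^3 + 3*a₁*(t*l₁-l₂)^2*(D₁*(1-t))
        + 3*a₂*(t*l₁-l₂)*(D₁*(1-t))^2 + a₃*(D₁*(1-t))^3) / (D₁*(1-t))^3 := by
    field_simp
  rw [heq, hkey, zero_div]
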